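/- For the rank-5 fusion ring SO(3)_2 of FPdim 12 with type [1,1,√3,√3,2], the formal codegrees are 12 (multiplicity 2), 4 (multiplicity 2) and 3, and all ratios 12/12, 12/4 = 3, 12/3 = 4 are (rational, hence algebraic) integers. -/

import Mathlib

open Polynomial Matrix

private lemma dethelp :
    (!![X-C 5,-C 1,0,0,-C 3; -C 1,X-C 5,0,0,-C 3; 0,0,X-C 8,-C 4,0;
      0,0,-C 4,X-C 8,0; -C 3,-C 3,0,0,X-C 9] : Matrix (Fin 5) (Fin 5) (Polynomial ℝ)).det
      = (X - 12) ^ 2 * (X - 4) ^ 2 * (X - 3) := by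
  set_option maxHeartbeats 4000000 in
  simp only [det_succ_row_zero, ← Nat.not_even_iff_odd, submatrix_apply, Fin.succ_zero_eq_one,
    submatrix_submatrix, det_unique, Fin.default_eq_zero, Function.comp_apply, Fin.succ_one_eq_two,
    Fin.sum_univ_succ, Fin.val_zero, Fin.zero_succAbove, Finset.univ_unique, Fin.val_succ,
    Fin.val_eq_zero, Fin.succ_succAbove_zero, Finset.sum_singleton, Fin.succ_succAbove_one,
    Fin.succ_succAbove_succ, Even.add_self, Matrix.cons_val', Matrix.cons_val_zero,
    Matrix.cons_val_one, Matrix.head_cons, Matrix.head_fin_const, Matrix.cons_val_fin_one,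
    Matrix.cons_val_succ, Fin.sum_univ_zero]
  norm_num [Fin.succAbove, Fin.lt_def, Matrix.cons_val', Matrix.cons_val_zero, Matrix.cons_val_one,
    Matrix.head_cons, Matrix.cons_val_succ]
  have h1 : ((2:Fin 3).castSucc : Fin 4) = 2 := rfl
  have h2 : (((2:Fin 3).succ : Fin 4).castSucc : Fin 5) = 3 := rfl
  have h3 : ((2:Fin 4).castSucc : Fin 5) = 2 := rfl
  simp only [h1, h2, h3, Matrix.cons_val_two, Matrix.cons_val_three, Matrix.tail_cons,
    Matrix.head_cons, Matrix.cons_val_zero, Matrix.cons_val_one]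
  ring_nf
  simp only [map_ofNat, Polynomial.C_1, Matrix.vecHead]
  ring

set_option maxHeartbeats 4000000 in
theorem so3_level2_codegrees :
    let X₁ : Matrix (Fin 5) (Fin 5) ℝ := 1
    let X₂ : Matrix (Fin 5) (Fin 5) ℝ :=
      !![0,1,0,0,0; 1,0,0,0,0; 0,0,0,1,0; 0,0,1,0,0; 0,0,0,0,1]
    let X₃ : Matrix (Fin 5) (Fin 5) ℝ :=
      !![0,0,1,0,0; 0,0,0,1,0; 1,0,0,0,1; 0,1,0,0,1; 0,0,1,1,0]
    let X₄ : Matrix (Fin 5) (Fin 5) ℝ :=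
      !![0,0,0,1,0; 0,0,1,0,0; 0,1,0,0,1; 1,0,0,0,1; 0,0,1,1,0]
    let X₅ : Matrix (Fin 5) (Fin 5) ℝ :=
      !![0,0,0,0,1; 0,0,0,0,1; 0,0,1,1,0; 0,0,1,1,0; 1,1,0,0,1]
    let A := X₁ * X₁ᵀ + X₂ * X₂ᵀ + X₃ * X₃ᵀ + X₄ * X₄ᵀ + X₅ * X₅ᵀ
    A.charpoly = (X - 12) ^ 2 * (X - 4) ^ 2 * (X - 3) ∧
      (12 : ℝ) / 4 = 3 ∧ (12 : ℝ) / 3 = 4 ∧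
      IsIntegral ℤ ((12 : ℝ) / 12) ∧ IsIntegral ℤ ((12 : ℝ) / 4) ∧
      IsIntegral ℤ ((12 : ℝ) / 3) := by
  intro X₁ X₂ X₃ X₄ X₅ A
  have hint : ∀ n : ℤ, IsIntegral ℤ ((n : ℝ)) := fun n =>
    ⟨Polynomial.X - Polynomial.C n, Polynomial.monic_X_sub_C n, by simp⟩
  refine ⟨?_, by norm_num, by norm_num,
    by rw [show (12:ℝ)/12 = ((1:ℤ):ℝ) by norm_num]; exact hint 1,
    by rw [show (12:ℝ)/4 = ((3:ℤ):ℝ) by norm_num]; exact hint 3,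
    by rw [show (12:ℝ)/3 = ((4:ℤ):ℝ) by norm_num]; exact hint 4⟩
  have h2 : X₂ᵀ = X₂ := by ext i j; fin_cases i <;> fin_cases j <;> rfl
  have h3 : X₃ᵀ = X₃ := by ext i j; fin_cases i <;> fin_cases j <;> rfl
  have h4 : X₄ᵀ = X₄ := by ext i j; fin_cases i <;> fin_cases j <;> rfl
  have h5 : X₅ᵀ = X₅ := by ext i j; fin_cases i <;> fin_cases j <;> rfl
  have hA : A = !![5,1,0,0,3; 1,5,0,0,3; 0,0,8,4,0; 0,0,4,8,0; 3,3,0,0,9] := by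
    show X₁ * X₁ᵀ + X₂ * X₂ᵀ + X₃ * X₃ᵀ + X₄ * X₄ᵀ + X₅ * X₅ᵀ = _
    rw [h2, h3, h4, h5, show X₁ᵀ = X₁ from Matrix.transpose_one, show X₁ * X₁ = 1 from one_mul 1]
    ext i j
    fin_cases i <;> fin_cases j <;>
      norm_num [X₂, X₃, X₄, X₅, Matrix.mul_apply, Fin.sum_univ_five, Matrix.one_apply,
        Matrix.add_apply, Matrix.cons_val_zero, Matrix.cons_val_one, Matrix.head_cons,
        Matrix.cons_val_two, Matrix.cons_val_three, Matrix.cons_val_four, Matrix.tail_cons,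
        Matrix.vecHead, Matrix.vecTail, Fin.ext_iff]
  have hc : charmatrix A = !![X-C 5,-C 1,0,0,-C 3; -C 1,X-C 5,0,0,-C 3; 0,0,X-C 8,-C 4,0;
      0,0,-C 4,X-C 8,0; -C 3,-C 3,0,0,X-C 9] := by
    rw [hA]; ext i j
    fin_cases i <;> fin_cases j <;> simp [charmatrix_apply]
  rw [Matrix.charpoly, hc, dethelp]
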